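/- Let ((w_{e,i}, w_{d,i}))_{i∈ℕ} be an i.i.d. sequence of pairs of independent standard Gaussian random variables. For each M ≥ 1 define u_R^{(M)} ∈ ℝ^{2M} = (sign(w_{e,1}), …, sign(w_{e,M}), 0, …, 0) and u_D^{(M)} ∈ ℝ^{2M} = (−sign(w_{d,1}), …, −sign(w_{d,M}), −sign(w_{e,1}), …, −sign(w_{e,M})). Then almost surely all coordinates are nonzero for every M, both vectors are nonzero, and the cosine score S(u_R^{(M)}, u_D^{(M)}) converges to 0 almost surely as M → ∞. -/

import Mathlib

open scoped RealInnerProductSpace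
open MeasureTheory ProbabilityTheory Filter

/-- Adam's sign-like initial update for the rate gradient:
`u_R = (sign(w_e), 0) ∈ ℝ^{2M}`. -/
noncomputable def uR {M : ℕ} (we : Fin M → ℝ) : EuclideanSpace ℝ (Fin M ⊕ Fin M) :=
  (WithLp.equiv 2 (Fin M ⊕ Fin M → ℝ)).symm
    (Sum.elim (fun i => Real.sign (we i)) (fun _ => 0))

/-- Adam's sign-like initial update for the distortion gradient:
`u_D = (−sign(w_d), −sign(w_e)) ∈ ℝ^{2M}`. -/
noncomputable def uD {M : ℕ} (we wd : Fin M → ℝ) : EuclideanSpace ℝ (Fin M ⊕ Fin M) :=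
  (WithLp.equiv 2 (Fin M ⊕ Fin M → ℝ)).symm
    (Sum.elim (fun i => -Real.sign (wd i)) (fun i => -Real.sign (we i)))

lemma measurable_realSign : Measurable Real.sign := by
  have h : Real.sign = fun r : ℝ => if r < 0 then (-1 : ℝ) else if 0 < r then 1 else 0 := rfl
  rw [h]
  exact Measurable.ite (measurableSet_lt measurable_id measurable_const) measurable_const
    (Measurable.ite (measurableSet_lt measurable_const measurable_id) measurable_const
      measurable_const)

lemma abs_realSign_le (r : ℝ) : |Real.sign r| ≤ 1 := by
  rcases Real.sign_apply_eq r with h | h | h <;> rw [h] <;> norm_num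

lemma sq_norm_realSign {r : ℝ} (hr : r ≠ 0) : ‖Real.sign r‖ ^ 2 = 1 := by
  rcases Real.sign_apply_eq_of_ne_zero r hr with h | h <;> rw [h] <;> norm_num

lemma integral_sign_gaussian : ∫ x, Real.sign x ∂(gaussianReal 0 1) = 0 := by
  have hmap : (gaussianReal 0 1).map (fun x => -x) = gaussianReal 0 1 := by
    have h := gaussianReal_map_const_mul (μ := 0) (v := 1) (-1)
    simp only [neg_one_mul] at h
    rw [h]
    norm_num
  have h1 : ∫ x, Real.sign x ∂(gaussianReal 0 1)
      = ∫ x, Real.sign (-x) ∂(gaussianReal 0 1) := by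
    conv_lhs => rw [← hmap]
    rw [integral_map (measurable_neg.aemeasurable) measurable_realSign.aestronglyMeasurable]
  have h2 : ∫ x, Real.sign (-x) ∂(gaussianReal 0 1)
      = - ∫ x, Real.sign x ∂(gaussianReal 0 1) := by
    simp_rw [Real.sign_neg]
    exact integral_neg _
  linarith [h1, h2]

lemma norm_uR_eq {M : ℕ} (w : Fin M → ℝ) (hw : ∀ i, w i ≠ 0) :
    ‖uR w‖ = Real.sqrt M := by
  rw [EuclideanSpace.norm_eq]
  congr 1
  rw [Fintype.sum_sum_type]
  simp only [uR, WithLp.equiv_symm_apply, PiLp.toLp_apply, Sum.elim_inl, Sum.elim_inr]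
  have h : ∀ i : Fin M, ‖Real.sign (w i)‖ ^ 2 = 1 := fun i => sq_norm_realSign (hw i)
  rw [Finset.sum_congr rfl (fun i _ => h i)]
  simp

lemma norm_uD_eq {M : ℕ} (we wd : Fin M → ℝ) (hwe : ∀ i, we i ≠ 0) (hwd : ∀ i, wd i ≠ 0) :
    ‖uD we wd‖ = Real.sqrt (2 * M) := by
  rw [EuclideanSpace.norm_eq]
  congr 1
  rw [Fintype.sum_sum_type]
  simp only [uD, WithLp.equiv_symm_apply, PiLp.toLp_apply, Sum.elim_inl, Sum.elim_inr, norm_neg]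
  have h1 : ∀ i : Fin M, ‖Real.sign (wd i)‖ ^ 2 = 1 := fun i => sq_norm_realSign (hwd i)
  have h2 : ∀ i : Fin M, ‖Real.sign (we i)‖ ^ 2 = 1 := fun i => sq_norm_realSign (hwe i)
  rw [Finset.sum_congr rfl (fun i _ => h1 i), Finset.sum_congr rfl (fun i _ => h2 i)]
  simp
  ring

lemma inner_uR_uD {M : ℕ} (we wd : Fin M → ℝ) :
    ⟪uR we, uD we wd⟫ = -∑ i : Fin M, Real.sign (we i) * Real.sign (wd i) := by
  rw [PiLp.inner_apply, Fintype.sum_sum_type]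
  simp only [uR, uD, WithLp.equiv_symm_apply, PiLp.toLp_apply, Sum.elim_inl, Sum.elim_inr,
    RCLike.inner_apply, conj_trivial]
  simp [mul_comm, Finset.sum_neg_distrib]

theorem adam_updates_asymptotically_orthogonal
    {Ω : Type*} [MeasurableSpace Ω] (μ : Measure Ω) [IsProbabilityMeasure μ]
    (we wd : ℕ → Ω → ℝ)
    (hmeas_e : ∀ i, Measurable (we i)) (hmeas_d : ∀ i, Measurable (wd i))
    (hindep : iIndepFun (Sum.elim we wd) μ)
    (hlaw : ∀ j : ℕ ⊕ ℕ, Measure.map (Sum.elim we wd j) μ = gaussianReal 0 1) :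
    ∀ᵐ ω ∂μ,
      (∀ i, we i ω ≠ 0) ∧ (∀ i, wd i ω ≠ 0) ∧
      (∀ M : ℕ, 1 ≤ M →
        uR (fun i : Fin M => we i ω) ≠ 0 ∧
        uD (fun i : Fin M => we i ω) (fun i : Fin M => wd i ω) ≠ 0) ∧
      Tendsto
        (fun M : ℕ =>
          ⟪uR (fun i : Fin M => we i ω),
              uD (fun i : Fin M => we i ω) (fun i : Fin M => wd i ω)⟫ /
            (‖uR (fun i : Fin M => we i ω)‖ *
              ‖uD (fun i : Fin M => we i ω) (fun i : Fin M => wd i ω)‖))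
        atTop (nhds 0) := by
  have hlaw_e : ∀ i, Measure.map (we i) μ = gaussianReal 0 1 := fun i => hlaw (.inl i)
  have hlaw_d : ∀ i, Measure.map (wd i) μ = gaussianReal 0 1 := fun i => hlaw (.inr i)
  have hG0 : (gaussianReal 0 1 : Measure ℝ) {0} = 0 :=
    gaussianReal_absolutelyContinuous 0 one_ne_zero (by simp)
  -- a.s. nonzero coordinates
  have hzero_e : ∀ i, ∀ᵐ ω ∂μ, we i ω ≠ 0 := by
    intro i
    have h0 : μ (we i ⁻¹' {0}) = 0 := by
      rw [← Measure.map_apply (hmeas_e i) (measurableSet_singleton 0), hlaw_e i]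
      exact hG0
    rw [ae_iff]
    simpa [Set.preimage, not_not] using h0
  have hzero_d : ∀ i, ∀ᵐ ω ∂μ, wd i ω ≠ 0 := by
    intro i
    have h0 : μ (wd i ⁻¹' {0}) = 0 := by
      rw [← Measure.map_apply (hmeas_d i) (measurableSet_singleton 0), hlaw_d i]
      exact hG0
    rw [ae_iff]
    simpa [Set.preimage, not_not] using h0
  have hne : ∀ᵐ ω ∂μ, ∀ i, we i ω ≠ 0 ∧ wd i ω ≠ 0 :=
    ae_all_iff.mpr fun i => ((hzero_e i).and (hzero_d i))
  -- the product-of-signs sequence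
  set X : ℕ → Ω → ℝ := fun i ω => Real.sign (we i ω) * Real.sign (wd i ω) with hX
  have hmeasSum : ∀ j : ℕ ⊕ ℕ, Measurable (Sum.elim we wd j) := by
    rintro (i | i)
    · exact hmeas_e i
    · exact hmeas_d i
  have hg : Measurable (fun p : ℝ × ℝ => Real.sign p.1 * Real.sign p.2) :=
    (measurable_realSign.comp measurable_fst).mul (measurable_realSign.comp measurable_snd)
  have hXmeas : ∀ i, Measurable (X i) := fun i =>
    (measurable_realSign.comp (hmeas_e i)).mul (measurable_realSign.comp (hmeas_d i))
  have hpair_indep : ∀ i, IndepFun (we i) (wd i) μ := fun i =>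
    hindep.indepFun (show (Sum.inl i : ℕ ⊕ ℕ) ≠ Sum.inr i by simp)
  have hpair_map : ∀ i, Measure.map (fun ω => (we i ω, wd i ω)) μ
      = (gaussianReal 0 1).prod (gaussianReal 0 1) := by
    intro i
    rw [(indepFun_iff_map_prod_eq_prod_map_map (hmeas_e i).aemeasurable
      (hmeas_d i).aemeasurable).mp (hpair_indep i), hlaw_e i, hlaw_d i]
  have hident : ∀ i, IdentDistrib (X i) (X 0) μ μ := by
    intro i
    have hpident : IdentDistrib (fun ω => (we i ω, wd i ω)) (fun ω => (we 0 ω, wd 0 ω)) μ μ :=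
      ⟨((hmeas_e i).prodMk (hmeas_d i)).aemeasurable,
        ((hmeas_e 0).prodMk (hmeas_d 0)).aemeasurable,
        by rw [hpair_map i, hpair_map 0]⟩
    exact hpident.comp hg
  have hindepX : Pairwise (Function.onFun (IndepFun · · μ) X) := by
    intro i j hij
    have h := hindep.indepFun_prodMk_prodMk hmeasSum (.inl i) (.inr i) (.inl j) (.inr j)
      (by simp [hij]) (by simp) (by simp) (by simp [hij])
    exact h.comp hg hg
  have hbound : ∀ ω, ‖X 0 ω‖ ≤ 1 := by
    intro ω
    rw [Real.norm_eq_abs, abs_mul]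
    calc |Real.sign (we 0 ω)| * |Real.sign (wd 0 ω)| ≤ 1 * 1 :=
      mul_le_mul (abs_realSign_le _) (abs_realSign_le _) (abs_nonneg _) zero_le_one
    _ = 1 := by ring
  have hint : Integrable (X 0) μ :=
    Integrable.mono' (integrable_const 1) (hXmeas 0).aestronglyMeasurable (ae_of_all _ hbound)
  have hmean : ∫ ω, X 0 ω ∂μ = 0 := by
    have hprod : ∫ ω, X 0 ω ∂μ
        = (∫ ω, Real.sign (we 0 ω) ∂μ) * ∫ ω, Real.sign (wd 0 ω) ∂μ :=
      IndepFun.integral_mul_eq_mul_integral ((hpair_indep 0).comp measurable_realSign measurable_realSign)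
        (measurable_realSign.comp (hmeas_e 0)).aestronglyMeasurable
        (measurable_realSign.comp (hmeas_d 0)).aestronglyMeasurable
    have he : ∫ ω, Real.sign (we 0 ω) ∂μ = 0 := by
      rw [← integral_map (hmeas_e 0).aemeasurable measurable_realSign.aestronglyMeasurable,
        hlaw_e 0, integral_sign_gaussian]
    rw [hprod, he, zero_mul]
  have hslln := strong_law_ae_real X hint hindepX hident
  rw [hmean] at hslln
  filter_upwards [hslln, hne] with ω hT hωne
  have hwe : ∀ i, we i ω ≠ 0 := fun i => (hωne i).1
  have hwd : ∀ i, wd i ω ≠ 0 := fun i => (hωne i).2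
  refine ⟨hwe, hwd, ?_, ?_⟩
  · intro M hM
    have hMpos : (0 : ℝ) < M := by exact_mod_cast hM
    constructor
    · rw [← norm_ne_zero_iff, norm_uR_eq _ (fun i => hwe i)]
      positivity
    · rw [← norm_ne_zero_iff, norm_uD_eq _ _ (fun i => hwe i) (fun i => hwd i)]
      positivity
  · have key : ∀ M : ℕ, 1 ≤ M →
        ⟪uR (fun i : Fin M => we i ω),
            uD (fun i : Fin M => we i ω) (fun i : Fin M => wd i ω)⟫ /
          (‖uR (fun i : Fin M => we i ω)‖ *
            ‖uD (fun i : Fin M => we i ω) (fun i : Fin M => wd i ω)‖)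
        = ((∑ i ∈ Finset.range M, X i ω) / M) * (-(Real.sqrt 2)⁻¹) := by
      intro M hM
      have hMpos : (0 : ℝ) < M := by exact_mod_cast hM
      rw [inner_uR_uD, norm_uR_eq _ (fun i => hwe i),
        norm_uD_eq _ _ (fun i => hwe i) (fun i => hwd i)]
      have hsum : ∑ i : Fin M, Real.sign (we i ω) * Real.sign (wd i ω)
          = ∑ i ∈ Finset.range M, X i ω := by
        rw [Fin.sum_univ_eq_sum_range (fun i => X i ω) M]
      have hsqrt : Real.sqrt M * Real.sqrt (2 * M) = M * Real.sqrt 2 := by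
        rw [← Real.sqrt_mul (by positivity)]
        have : (M : ℝ) * (2 * M) = 2 * M ^ 2 := by ring
        rw [this, Real.sqrt_mul (by norm_num), Real.sqrt_sq hMpos.le]
        ring
      rw [hsum, hsqrt]
      have h2 : Real.sqrt 2 ≠ 0 := by positivity
      field_simp
    have hTmul : Tendsto
        (fun M : ℕ => ((∑ i ∈ Finset.range M, X i ω) / M) * (-(Real.sqrt 2)⁻¹))
        atTop (nhds 0) := by
      simpa using hT.mul_const (-(Real.sqrt 2)⁻¹)
    exact Tendsto.congr'
      (eventually_atTop.mpr ⟨1, fun M hM => (key M hM).symm⟩) hTmul
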